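/- Let P_n be the path of order n ≥ 3 and let H be a connected simple graph of order m ≥ 1. Then the distinguishing index satisfies D'(P_n[H]) = 2. -/

import Mathlib

open SimpleGraph

/-- The lexicographic product of two simple graphs. -/
def lexProd {V W : Type*} (G : SimpleGraph V) (H : SimpleGraph W) :
    SimpleGraph (V × W) where
  Adj p q := G.Adj p.1 q.1 ∨ (p.1 = q.1 ∧ H.Adj p.2 q.2)
  symm := by
    constructor
    rintro p q (h | ⟨h1, h2⟩)
    · exact Or.inl h.symm
    · exact Or.inr ⟨h1.symm, h2.symm⟩
  loopless := by
    constructor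
    rintro p (h | ⟨_, h⟩)
    · exact G.loopless.irrefl _ h
    · exact H.loopless.irrefl _ h

/-- The distinguishing number: the least `d` such that there is a vertex labeling with `d`
labels preserved only by the identity automorphism. -/
noncomputable def distinguishingNumber {V : Type*} (G : SimpleGraph V) : ℕ :=
  sInf {d : ℕ | ∃ φ : V → Fin d,
    ∀ σ : G ≃g G, (∀ v, φ (σ v) = φ v) → ∀ v, σ v = v}

/-- The distinguishing index: the least `d` such that there is an edge labeling with `d`
labels preserved only by the identity automorphism. -/
noncomputable def distinguishingIndex {V : Type*} (G : SimpleGraph V) : ℕ :=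
  sInf {d : ℕ | ∃ ψ : G.edgeSet → Fin d,
    ∀ σ : G ≃g G, (∀ e, ψ (σ.mapEdgeSet e) = ψ e) → ∀ v, σ v = v}

/-- Every automorphism of `G[H]` is of wreath form, i.e. `Aut(G[H]) = Aut(G)[Aut(H)]`. -/
def wreathForm {V W : Type*} (G : SimpleGraph V) (H : SimpleGraph W) : Prop :=
  ∀ f : lexProd G H ≃g lexProd G H,
    ∃ (α : G ≃g G) (β : V → (H ≃g H)),
      ∀ p : V × W, f p = (α p.1, β (α p.1) p.2)

/-! ### Auxiliary material -/

open Finset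

lemma lexProd_adj {V W : Type*} (G : SimpleGraph V) (H : SimpleGraph W) (p q : V × W) :
    (lexProd G H).Adj p q ↔ (G.Adj p.1 q.1 ∨ (p.1 = q.1 ∧ H.Adj p.2 q.2)) := Iff.rfl

/-- The reversal automorphism of `P_n[H]`. -/
def pathRev {W : Type*} (H : SimpleGraph W) (n : ℕ) :
    lexProd (SimpleGraph.pathGraph n) H ≃g lexProd (SimpleGraph.pathGraph n) H where
  toEquiv := Equiv.prodCongr Fin.revPerm (Equiv.refl W)
  map_rel_iff' := by
    rintro ⟨i, x⟩ ⟨j, y⟩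
    simp only [Equiv.prodCongr_apply, Fin.revPerm_apply, Equiv.refl_apply, Prod.map_apply,
      lexProd_adj, pathGraph_adj, Fin.val_rev, Fin.rev_inj]
    have hi := i.isLt; have hj := j.isLt
    constructor
    · rintro (h | h); · left; omega
      · right; exact h
    · rintro (h | h); · left; omega
      · right; exact h

section Main
set_option linter.unusedSectionVars false

variable {W : Type*} [Fintype W] (H : SimpleGraph W) (n : ℕ)

def labUp (i a b : ℕ) : Prop := if i = 0 then b < a else b ≤ a

variable (m : ℕ) (eW : W ≃ Fin m)

/-- The `1`-labelled pairs: all edges inside layer `0`, and the "staircase" cross edges. -/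
def lab (p q : Fin n × W) : Prop :=
  (p.1.val = 0 ∧ q.1.val = 0) ∨
  (q.1.val = p.1.val + 1 ∧ labUp p.1.val (eW p.2) (eW q.2)) ∨
  (p.1.val = q.1.val + 1 ∧ labUp q.1.val (eW q.2) (eW p.2))

lemma lab_symm (p q : Fin n × W) : lab n m eW p q ↔ lab n m eW q p := by unfold lab; tauto

def labSym : Sym2 (Fin n × W) → Prop :=
  Sym2.lift ⟨fun p q => lab n m eW p q, fun p q => propext (lab_symm n m eW p q)⟩

@[simp] lemma labSym_mk (p q : Fin n × W) :
    labSym n m eW s(p, q) ↔ lab n m eW p q := Iff.rfl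

/-- endpoint layers -/
def ep (v : Fin n × W) : Prop := v.1.val = 0 ∨ v.1.val = n - 1

open Classical in
noncomputable def dg (v : Fin n × W) : ℕ :=
  ((univ : Finset (Fin n × W)).filter fun q =>
    (lexProd (SimpleGraph.pathGraph n) H).Adj v q).card

open Classical in
noncomputable def tt (v : Fin n × W) : ℕ :=
  ((univ : Finset (Fin n × W)).filter fun q =>
    ¬ ep n q ∧ (lexProd (SimpleGraph.pathGraph n) H).Adj v q ∧ lab n m eW v q).card

open Classical in
noncomputable def uu (v : Fin n × W) : ℕ :=
  ((univ : Finset (Fin n × W)).filter fun q =>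
    ep n q ∧ (lexProd (SimpleGraph.pathGraph n) H).Adj v q ∧ lab n m eW v q).card

lemma card_filter_equiv {V : Type*} [Fintype V] (σ : V ≃ V) (P Q : V → Prop)
    [DecidablePred P] [DecidablePred Q]
    (h : ∀ q, P q ↔ Q (σ q)) :
    ((univ : Finset V).filter P).card = ((univ : Finset V).filter Q).card := by
  apply Finset.card_bij' (fun q _ => σ q) (fun q _ => σ.symm q)
  · intro q hq; simp only [mem_filter, mem_univ, true_and] at *; exact (h q).mp hq
  · intro q hq; simp only [mem_filter, mem_univ, true_and] at *
    have := h (σ.symm q); simp at this; exact this.mpr hq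
  · intro q _; simp
  · intro q _; simp

open Classical in
lemma card_filter_lt (a : Fin m) :
    ((univ : Finset W).filter fun y => eW y < a).card = a.val := by
  have h1 : ((univ : Finset W).filter fun y => eW y < a).card
      = ((univ : Finset (Fin m)).filter fun i => i < a).card := by
    apply Finset.card_bij (fun y _ => eW y)
    · intro y hy; simp_all
    · intro y1 _ y2 _ h; exact eW.injective h
    · intro i hi; exact ⟨eW.symm i, by simp_all, by simp⟩
  rw [h1]
  have h2 : ((univ : Finset (Fin m)).filter fun i => i < a) = Finset.Iio a := by
    ext i; simp
  rw [h2, Fin.card_Iio]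

open Classical in
lemma card_filter_ge (a : Fin m) :
    ((univ : Finset W).filter fun y => a ≤ eW y).card = m - a.val := by
  have h1 : ((univ : Finset W).filter fun y => a ≤ eW y).card
      = ((univ : Finset (Fin m)).filter fun i => a ≤ i).card := by
    apply Finset.card_bij (fun y _ => eW y)
    · intro y hy; simp_all
    · intro y1 _ y2 _ h; exact eW.injective h
    · intro i hi; exact ⟨eW.symm i, by simp_all, by simp⟩
  rw [h1]
  have h2 : ((univ : Finset (Fin m)).filter fun i => a ≤ i) = Finset.Ici a := by
    ext i; simp
  rw [h2, Fin.card_Ici]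

open Classical in
lemma hdeg_lt (x : W) :
    ((univ : Finset W).filter fun y => H.Adj x y).card < Fintype.card W := by
  rw [← Finset.card_univ]
  apply Finset.card_lt_card
  constructor
  · exact filter_subset _ _
  · intro hsub
    have := hsub (mem_univ x)
    simp only [mem_filter] at this
    exact H.loopless.irrefl x this.2

open Classical in
lemma pdeg_le (hn : 3 ≤ n) (i : Fin n) (h : i.val = 0 ∨ i.val = n - 1) :
    ((univ : Finset (Fin n)).filter fun j => (SimpleGraph.pathGraph n).Adj i j).card ≤ 1 := by
  rcases h with h | h
  · calc _ ≤ ({(⟨1, by omega⟩ : Fin n)} : Finset (Fin n)).card := by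
          apply Finset.card_le_card
          intro q hq
          simp only [mem_filter, mem_univ, true_and, pathGraph_adj] at hq
          simp only [mem_singleton, Fin.ext_iff]
          omega
      _ = 1 := card_singleton _
  · calc _ ≤ ({(⟨n - 2, by omega⟩ : Fin n)} : Finset (Fin n)).card := by
          apply Finset.card_le_card
          intro q hq
          simp only [mem_filter, mem_univ, true_and, pathGraph_adj] at hq
          simp only [mem_singleton, Fin.ext_iff]
          have := q.isLt
          omega
      _ = 1 := card_singleton _

open Classical in
lemma pdeg_ge (hn : 3 ≤ n) (i : Fin n) (h : ¬ (i.val = 0 ∨ i.val = n - 1)) :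
    2 ≤ ((univ : Finset (Fin n)).filter fun j => (SimpleGraph.pathGraph n).Adj i j).card := by
  push_neg at h
  have hi := i.isLt
  have hsub : ({(⟨i.val - 1, by omega⟩ : Fin n), (⟨i.val + 1, by omega⟩ : Fin n)} : Finset (Fin n))
      ⊆ (univ : Finset (Fin n)).filter fun j => (SimpleGraph.pathGraph n).Adj i j := by
    intro q hq
    simp only [mem_insert, mem_singleton] at hq
    simp only [mem_filter, mem_univ, true_and, pathGraph_adj]
    rcases hq with rfl | rfl
    · right; simp; omega
    · left; simp
  have hcard : ({(⟨i.val - 1, by omega⟩ : Fin n), (⟨i.val + 1, by omega⟩ : Fin n)} :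
      Finset (Fin n)).card = 2 := by
    apply Finset.card_pair
    simp only [ne_eq, Fin.ext_iff]
    omega
  calc 2 = _ := hcard.symm
    _ ≤ _ := Finset.card_le_card hsub

open Classical in
lemma dg_eq (i : Fin n) (x : W) :
    dg H n (i, x) =
    ((univ : Finset (Fin n)).filter fun j => (SimpleGraph.pathGraph n).Adj i j).card
      * Fintype.card W
    + ((univ : Finset W).filter fun y => H.Adj x y).card := by
  unfold dg
  have hsplit : ((univ : Finset (Fin n × W)).filter fun q =>
      (lexProd (SimpleGraph.pathGraph n) H).Adj (i, x) q)
      = ((univ : Finset (Fin n × W)).filter fun q => (SimpleGraph.pathGraph n).Adj i q.1)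
        ∪ ((univ : Finset (Fin n × W)).filter fun q => q.1 = i ∧ H.Adj x q.2) := by
    rw [← Finset.filter_or]
    apply Finset.filter_congr
    intro q _
    rw [lexProd_adj]
    constructor
    · rintro (h | ⟨h1, h2⟩); · exact Or.inl h
      · exact Or.inr ⟨h1.symm, h2⟩
    · rintro (h | ⟨h1, h2⟩); · exact Or.inl h
      · exact Or.inr ⟨h1.symm, h2⟩
  rw [hsplit, Finset.card_union_of_disjoint]
  · congr 1
    · have h1 : ((univ : Finset (Fin n × W)).filter fun q => (SimpleGraph.pathGraph n).Adj i q.1)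
          = ((univ : Finset (Fin n)).filter fun j => (SimpleGraph.pathGraph n).Adj i j) ×ˢ
              (univ : Finset W) := by
        ext ⟨a, b⟩
        simp [Finset.mem_product]
      rw [h1, Finset.card_product, Finset.card_univ]
    · have h2 : ((univ : Finset (Fin n × W)).filter fun q => q.1 = i ∧ H.Adj x q.2)
          = ({i} : Finset (Fin n)) ×ˢ ((univ : Finset W).filter fun y => H.Adj x y) := by
        ext ⟨a, b⟩
        simp only [mem_filter, mem_univ, true_and, Finset.mem_product, mem_singleton]
      rw [h2, Finset.card_product, card_singleton, one_mul]
  · rw [Finset.disjoint_left]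
    rintro ⟨a, b⟩ h1 h2
    simp only [mem_filter, mem_univ, true_and] at h1 h2
    rw [h2.1] at h1
    exact (SimpleGraph.pathGraph n).loopless.irrefl i h1

lemma ep_iff (hn : 3 ≤ n) (hW : 1 ≤ Fintype.card W) (v : Fin n × W) :
    ep n v ↔ dg H n v < 2 * Fintype.card W := by
  classical
  obtain ⟨i, x⟩ := v
  rw [dg_eq]
  have hh := hdeg_lt H x
  constructor
  · intro h
    have := pdeg_le n hn i h
    nlinarith
  · intro h
    by_contra hc
    have := pdeg_ge n hn i hc
    nlinarith


open Classical in
lemma tt_zero (hn : 3 ≤ n) (x : W) :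
    tt H n m eW (⟨0, by omega⟩, x) = (eW x).val := by
  unfold tt
  have hset : ((univ : Finset (Fin n × W)).filter fun q =>
      ¬ ep n q ∧ (lexProd (SimpleGraph.pathGraph n) H).Adj (⟨0, by omega⟩, x) q ∧
        lab n m eW (⟨0, by omega⟩, x) q)
      = ({(⟨1, by omega⟩ : Fin n)} : Finset (Fin n)) ×ˢ
          ((univ : Finset W).filter fun y => eW y < eW x) := by
    ext ⟨a, b⟩
    simp only [mem_filter, mem_univ, true_and, Finset.mem_product, mem_singleton]
    constructor
    · rintro ⟨hep, hadj, hlab⟩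
      rcases hlab with ⟨h1, h2⟩ | ⟨h1, h2⟩ | ⟨h1, h2⟩
      · exact absurd (Or.inl h2) hep
      · simp only [labUp, if_pos rfl] at h2
        exact ⟨Fin.ext (by simpa using h1), h2⟩
      · simp at h1
    · rintro ⟨rfl, hb⟩
      refine ⟨?_, ?_, ?_⟩
      · rintro (h | h) <;> simp only [] at h <;> omega
      · exact Or.inl (pathGraph_adj.mpr (Or.inl (by simp)))
      · exact Or.inr (Or.inl ⟨by simp, by simpa [labUp] using hb⟩)
  rw [hset, Finset.card_product, card_singleton, one_mul, card_filter_lt]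

open Classical in
lemma tt_last (hn : 3 ≤ n) (x : W) :
    tt H n m eW (⟨n - 1, by omega⟩, x) = m - (eW x).val := by
  unfold tt
  have hset : ((univ : Finset (Fin n × W)).filter fun q =>
      ¬ ep n q ∧ (lexProd (SimpleGraph.pathGraph n) H).Adj (⟨n - 1, by omega⟩, x) q ∧
        lab n m eW (⟨n - 1, by omega⟩, x) q)
      = ({(⟨n - 2, by omega⟩ : Fin n)} : Finset (Fin n)) ×ˢ
          ((univ : Finset W).filter fun y => eW x ≤ eW y) := by
    ext ⟨a, b⟩
    simp only [mem_filter, mem_univ, true_and, Finset.mem_product, mem_singleton]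
    constructor
    · rintro ⟨hep, hadj, hlab⟩
      have ha := a.isLt
      rcases hlab with ⟨h1, h2⟩ | ⟨h1, h2⟩ | ⟨h1, h2⟩
      · simp only [] at h1; omega
      · simp only [] at h1; omega
      · simp only [] at h1 h2
        have ha2 : a.val = n - 2 := by omega
        have hne : a.val ≠ 0 := by omega
        rw [labUp, if_neg hne] at h2
        exact ⟨Fin.ext (by simpa using ha2), h2⟩
    · rintro ⟨rfl, hb⟩
      refine ⟨?_, ?_, ?_⟩
      · rintro (h | h) <;> simp only [] at h <;> omega
      · refine Or.inl (pathGraph_adj.mpr (Or.inr ?_))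
        simp only []
        omega
      · refine Or.inr (Or.inr ⟨by simp only []; omega, ?_⟩)
        have hne : n - 2 ≠ 0 := by omega
        simpa [labUp, hne] using hb
  rw [hset, Finset.card_product, card_singleton, one_mul, card_filter_ge]

open Classical in
lemma uu_zero (hn : 3 ≤ n) (x : W) :
    uu H n m eW (⟨0, by omega⟩, x) = ((univ : Finset W).filter fun y => H.Adj x y).card := by
  unfold uu
  have hset : ((univ : Finset (Fin n × W)).filter fun q =>
      ep n q ∧ (lexProd (SimpleGraph.pathGraph n) H).Adj (⟨0, by omega⟩, x) q ∧
        lab n m eW (⟨0, by omega⟩, x) q)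
      = ({(⟨0, by omega⟩ : Fin n)} : Finset (Fin n)) ×ˢ
          ((univ : Finset W).filter fun y => H.Adj x y) := by
    ext ⟨a, b⟩
    simp only [mem_filter, mem_univ, true_and, Finset.mem_product, mem_singleton]
    constructor
    · rintro ⟨hep, hadj, hlab⟩
      rcases hlab with ⟨h1, h2⟩ | ⟨h1, h2⟩ | ⟨h1, h2⟩
      · have ha : a = (⟨0, by omega⟩ : Fin n) := Fin.ext (by simpa using h2)
        refine ⟨ha, ?_⟩
        rcases hadj with hp | ⟨hp1, hp2⟩
        · rw [pathGraph_adj] at hp; dsimp only at hp h2; omega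
        · exact hp2
      · dsimp only at h1
        rcases hep with h | h <;> dsimp only at h <;> omega
      · simp at h1
    · rintro ⟨rfl, hb⟩
      exact ⟨Or.inl rfl, Or.inr ⟨rfl, hb⟩, Or.inl ⟨rfl, rfl⟩⟩
  rw [hset, Finset.card_product, card_singleton, one_mul]

open Classical in
lemma uu_last (hn : 3 ≤ n) (x : W) :
    uu H n m eW (⟨n - 1, by omega⟩, x) = 0 := by
  unfold uu
  rw [Finset.card_eq_zero, Finset.filter_eq_empty_iff]
  rintro ⟨a, b⟩ _
  rintro ⟨hep, hadj, hlab⟩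
  have ha := a.isLt
  rcases hlab with ⟨h1, h2⟩ | ⟨h1, h2⟩ | ⟨h1, h2⟩
  · dsimp only at h1; omega
  · dsimp only at h1; omega
  · dsimp only at h1
    rcases hep with h | h <;> dsimp only at h <;> omega

lemma conn_eq (hH : H.Connected) (x : W) (h : ∀ z, ¬ H.Adj x z) (y : W) : y = x := by
  obtain ⟨w⟩ := hH.preconnected x y
  cases w with
  | nil => rfl
  | cons a p => exact absurd a (h _)

theorem two_mem (hH : H.Connected) (hW : 1 ≤ Fintype.card W) (hn : 3 ≤ n) :
    ∃ ψ : (lexProd (SimpleGraph.pathGraph n) H).edgeSet → Fin 2,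
      ∀ σ : lexProd (SimpleGraph.pathGraph n) H ≃g lexProd (SimpleGraph.pathGraph n) H,
        (∀ e, ψ (σ.mapEdgeSet e) = ψ e) → ∀ v, σ v = v := by
  classical
  have hpos0 : (0 : ℕ) < n := by omega
  have hpos9 : n - 1 < n := by omega
  set m := Fintype.card W with hm
  set eW : W ≃ Fin m := Fintype.equivFin W with heW
  refine ⟨fun ed => if labSym n m eW ed.1 then 1 else 0, ?_⟩
  intro σ hψ
  have hL : ∀ p q : Fin n × W, (lexProd (SimpleGraph.pathGraph n) H).Adj p q →
      (lab n m eW (σ p) (σ q) ↔ lab n m eW p q) := by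
    intro p q h
    have h2 := hψ ⟨s(p, q), h⟩
    have h3 : ((σ.mapEdgeSet ⟨s(p, q), h⟩ :
        (lexProd (SimpleGraph.pathGraph n) H).edgeSet) : Sym2 (Fin n × W))
        = s(σ p, σ q) := by
      simp [Iso.mapEdgeSet, Hom.mapEdgeSet, Sym2.map_pair_eq]
    simp only [h3] at h2
    simp only [labSym, Sym2.lift_mk] at h2
    by_cases c2 : lab n m eW p q
    · by_cases c1 : lab n m eW (σ p) (σ q)
      · exact iff_of_true c1 c2
      · have h2 : (if lab n m eW (σ p) (σ q) then (1 : Fin 2) else 0) = if lab n m eW p q then 1 else 0 := h2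
        rw [if_pos c2, if_neg c1] at h2
        exact absurd h2 (by decide)
    · by_cases c1 : lab n m eW (σ p) (σ q)
      · have h2 : (if lab n m eW (σ p) (σ q) then (1 : Fin 2) else 0) = if lab n m eW p q then 1 else 0 := h2
        rw [if_neg c2, if_pos c1] at h2
        exact absurd h2 (by decide)
      · exact iff_of_false c1 c2
  have hdg : ∀ v, dg H n (σ v) = dg H n v := by
    intro v
    unfold dg
    exact (card_filter_equiv σ.toEquiv _ _ (fun q => σ.map_rel_iff.symm)).symm
  have hep' : ∀ v, ep n (σ v) ↔ ep n v := by
    intro v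
    rw [ep_iff H n hn hW, ep_iff H n hn hW, hdg]
  have htt : ∀ v, tt H n m eW (σ v) = tt H n m eW v := by
    intro v
    unfold tt
    refine (card_filter_equiv σ.toEquiv _ _ ?_).symm
    intro q
    constructor
    · rintro ⟨h1, h2, h3⟩
      exact ⟨fun hc => h1 ((hep' q).mp hc), σ.map_rel_iff.mpr h2, (hL v q h2).mpr h3⟩
    · rintro ⟨h1, h2, h3⟩
      have h2' := σ.map_rel_iff.mp h2
      exact ⟨fun hc => h1 ((hep' q).mpr hc), h2', (hL v q h2').mp h3⟩
  have huu : ∀ v, uu H n m eW (σ v) = uu H n m eW v := by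
    intro v
    unfold uu
    refine (card_filter_equiv σ.toEquiv _ _ ?_).symm
    intro q
    constructor
    · rintro ⟨h1, h2, h3⟩
      exact ⟨(hep' q).mpr h1, σ.map_rel_iff.mpr h2, (hL v q h2).mpr h3⟩
    · rintro ⟨h1, h2, h3⟩
      have h2' := σ.map_rel_iff.mp h2
      exact ⟨(hep' q).mp h1, h2', (hL v q h2').mp h3⟩
  -- Step 0: the bottom layer is fixed pointwise.
  have step0 : ∀ x : W, σ ((⟨0, hpos0⟩ : Fin n), x) = ((⟨0, hpos0⟩ : Fin n), x) := by
    intro x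
    rcases hq : σ ((⟨0, hpos0⟩ : Fin n), x) with ⟨a, y⟩
    have hepx : ep n (a, y) := by
      rw [← hq]
      exact (hep' _).mpr (Or.inl rfl)
    rcases hepx with h | h
    · have ha : a = (⟨0, hpos0⟩ : Fin n) := Fin.ext h
      rw [ha] at hq
      have h5 := htt ((⟨0, hpos0⟩ : Fin n), x)
      rw [hq, tt_zero H n m eW hn, tt_zero H n m eW hn] at h5
      have hyx : y = x := eW.injective (Fin.ext h5)
      rw [ha, hyx]
    · exfalso
      have ha : a = (⟨n - 1, hpos9⟩ : Fin n) := Fin.ext h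
      rw [ha] at hq
      have h6 := huu ((⟨0, hpos0⟩ : Fin n), x)
      rw [hq, uu_last H n m eW hn, uu_zero H n m eW hn] at h6
      have hno : ∀ z, ¬ H.Adj x z := by
        intro z hz
        have hz2 : z ∈ (univ : Finset W).filter fun y' => H.Adj x y' :=
          mem_filter.mpr ⟨mem_univ z, hz⟩
        rw [Finset.card_eq_zero.mp h6.symm] at hz2
        exact absurd hz2 (Finset.notMem_empty z)
      have hm1 : m = 1 := by
        refine le_antisymm ?_ hW
        exact Fintype.card_le_one_iff.mpr fun a' b' =>
          (conn_eq H hH x hno a').trans (conn_eq H hH x hno b').symm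
      have h7 := htt ((⟨0, hpos0⟩ : Fin n), x)
      rw [hq, tt_last H n m eW hn, tt_zero H n m eW hn] at h7
      have h8 := (eW x).isLt
      have h9 := (eW y).isLt
      omega
  -- Induction on layers.
  have main : ∀ k : ℕ, ∀ i : Fin n, i.val ≤ k → ∀ x : W, σ (i, x) = (i, x) := by
    intro k
    induction k with
    | zero =>
      intro i hi x
      have hi0 : i = (⟨0, hpos0⟩ : Fin n) := Fin.ext (by simp only [Fin.val_mk]; omega)
      rw [hi0]
      exact step0 x
    | succ k ih =>
      intro i hi x
      rcases Nat.lt_or_ge i.val (k + 1) with hlt | hge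
      · exact ih i (by omega) x
      have hik : i.val = k + 1 := by omega
      have hkn : k + 1 < n := hik ▸ i.isLt
      rcases hq : σ (i, x) with ⟨a, y⟩
      have hage : ¬ (a.val ≤ k) := by
        intro hak
        have h1 := ih a hak y
        have h2 : ((i, x) : Fin n × W) = (a, y) := σ.injective (by rw [hq, h1])
        have h3 := congrArg (fun p : Fin n × W => (p.1 : ℕ)) h2
        dsimp at h3
        omega
      have hadj : (lexProd (SimpleGraph.pathGraph n) H).Adj (i, x) ((⟨k, by omega⟩ : Fin n), x) :=
        Or.inl (pathGraph_adj.mpr (Or.inr (by dsimp; omega)))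
      have hadj2 := σ.map_rel_iff.mpr hadj
      rw [hq, ih ⟨k, by omega⟩ le_rfl x] at hadj2
      have hai : a = i := by
        rcases hadj2 with hp | ⟨hp, _⟩
        · rw [pathGraph_adj] at hp
          dsimp at hp
          exact Fin.ext (by omega)
        · exfalso
          have := congrArg Fin.val hp
          dsimp at this
          omega
      have haik : a.val = k + 1 := by rw [hai]; exact hik
      have hkn' : k < n := by omega
      have e1 : ∀ (w' z : W) (b : Fin n), b.val = k + 1 →
          (lab n m eW ((⟨k, hkn'⟩ : Fin n), z) (b, w') ↔ labUp k (eW z) (eW w')) := by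
        intro w' z b hb
        unfold lab
        constructor
        · rintro (⟨h5, h6⟩ | ⟨h5, h6⟩ | ⟨h5, h6⟩)
          · exfalso; dsimp at h6; omega
          · exact h6
          · exfalso; dsimp at h5; omega
        · intro h6
          exact Or.inr (Or.inl ⟨by dsimp; omega, h6⟩)
      have key : ∀ z : W, labUp k (eW z) (eW y) ↔ labUp k (eW z) (eW x) := by
        intro z
        have h3 : (lexProd (SimpleGraph.pathGraph n) H).Adj ((⟨k, hkn'⟩ : Fin n), z) (i, x) :=
          Or.inl (pathGraph_adj.mpr (Or.inl (by dsimp; omega)))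
        have h4 := hL _ _ h3
        rw [ih ⟨k, hkn'⟩ le_rfl z, hq] at h4
        rw [e1 y z a haik, e1 x z i hik] at h4
        exact h4
      have hyx : y = x := by
        apply eW.injective
        rcases Nat.eq_zero_or_pos k with hk | hk
        · subst hk
          have k1 := key x
          have k2 := key y
          simp only [labUp, if_pos rfl] at k1 k2
          exact le_antisymm (not_lt.mp fun hc => lt_irrefl _ (k2.mpr hc))
            (not_lt.mp fun hc => lt_irrefl _ (k1.mp hc))
        · have hk0 : k ≠ 0 := by omega
          have k1 := key x
          have k2 := key y
          simp only [labUp, if_neg hk0] at k1 k2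
          exact le_antisymm (k1.mpr le_rfl) (k2.mp le_rfl)
      rw [hai, hyx]
  intro v
  rcases v with ⟨i, x⟩
  exact main i.val i le_rfl x

end Main

theorem stmt14 {W : Type*} [Fintype W] (H : SimpleGraph W) (hH : H.Connected)
    (hW : 1 ≤ Fintype.card W) (n : ℕ) (hn : 3 ≤ n) :
    distinguishingIndex (lexProd (SimpleGraph.pathGraph n) H) = 2 := by
  classical
  obtain ⟨w0⟩ : Nonempty W := Fintype.card_pos_iff.mp hW
  obtain ⟨ψ, hψ⟩ := two_mem H n hH hW hn
  have hmem2 : 2 ∈ {d : ℕ | ∃ ψ : (lexProd (SimpleGraph.pathGraph n) H).edgeSet → Fin d,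
      ∀ σ : lexProd (SimpleGraph.pathGraph n) H ≃g lexProd (SimpleGraph.pathGraph n) H,
        (∀ e, ψ (σ.mapEdgeSet e) = ψ e) → ∀ v, σ v = v} := ⟨ψ, hψ⟩
  refine le_antisymm (Nat.sInf_le hmem2) (le_csInf ⟨2, hmem2⟩ ?_)
  rintro d ⟨φ, hφ⟩
  by_contra hd
  push_neg at hd
  have h01 : (lexProd (SimpleGraph.pathGraph n) H).Adj
      (⟨0, by omega⟩, w0) (⟨1, by omega⟩, w0) := by
    rw [lexProd_adj]
    exact Or.inl (SimpleGraph.pathGraph_adj.mpr (Or.inl rfl))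
  interval_cases d
  · exact (φ ⟨s((⟨0, by omega⟩, w0), (⟨1, by omega⟩, w0)), h01⟩).elim0
  · have := hφ (pathRev H n) (fun e => Subsingleton.elim _ _) (⟨0, by omega⟩, w0)
    have h2 : (Fin.rev (⟨0, by omega⟩ : Fin n)) = (⟨0, by omega⟩ : Fin n) :=
      congrArg Prod.fst this
    have h3 := congrArg Fin.val h2
    rw [Fin.val_rev] at h3
    simp at h3
    omega
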